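/- If G is a unicyclic graph with n ≥ 4 vertices and a > 1 or 0 < a ≤ e^{-2}, then 2na² ≤ Σ_{u ∈ V(G)} d_u·a^{d_u} ≤ (n-1)a^{n-1} + 4a² + (n-3)a. The lower bound is attained if and only if G = C_n and the upper bound if and only if G = U_n^3. -/

import Mathlib

open Finset SimpleGraph

/-- A unicyclic graph: connected with as many edges as vertices. -/
def IsUnicyclic {n : ℕ} (G : SimpleGraph (Fin n)) [DecidableRel G.Adj] : Prop :=
  G.Connected ∧ G.edgeFinset.card = n

/-- The graph `U_n^3`: a triangle on vertices 0,1,2 with n-3 pendant edges attached to 0. -/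
def unicyclicStar (n : ℕ) : SimpleGraph (Fin n) :=
  SimpleGraph.fromRel (fun i j => i.val = 0 ∨ (i.val = 1 ∧ j.val = 2))

namespace SEIaux

/-! ### Arithmetic core -/

noncomputable def ff (a : ℝ) (d : ℕ) : ℝ := d * a ^ d
noncomputable def dd (a : ℝ) (d : ℕ) : ℝ := ff a (d+1) - ff a d
noncomputable def gg (a : ℝ) (d : ℕ) : ℝ := ff a d - (2*a^2 + (2*a^2 - a) * ((d:ℝ) - 2))

variable {a : ℝ} (hA : 1 < a ∨ (0 < a ∧ 3 * a < 1))
include hA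

lemma apos : 0 < a := by
  rcases hA with h | h
  · linarith
  · exact h.1

lemma dd_succ_lt (e : ℕ) : dd a (e+1) < dd a (e+2) := by
  have hp : 0 < a ^ (e+1) := pow_pos (apos hA) _
  have key : 0 < ((e:ℝ)+2)*(a-1)^2 + (a^2-1) := by
    have he : 0 ≤ ((e:ℝ))*(a-1)^2 := by positivity
    rcases hA with h | h
    · have h2 : 0 < (a-1)*(a+1) := mul_pos (by linarith) (by linarith)
      nlinarith
    · have h2 : 0 < (1-3*a)*(1-a) := mul_pos (by linarith [h.2]) (by linarith [h.2, h.1])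
      nlinarith
  have expand : dd a (e+2) - dd a (e+1)
      = a ^ (e+1) * (((e:ℝ)+2)*(a-1)^2 + (a^2-1)) := by
    simp only [dd, ff]
    push_cast
    rw [show e+2+1 = (e+1)+2 by ring, show e+2 = (e+1)+1 by ring,
        pow_add, pow_add, pow_one]
    ring
  nlinarith [mul_pos hp key]

lemma dd_lt {j k : ℕ} (hj : 1 ≤ j) (hjk : j < k) : dd a j < dd a k := by
  induction k with
  | zero => omega
  | succ k ih =>
    rcases Nat.lt_or_ge j k with h | h
    · have hk : 1 ≤ k := by omega
      refine (ih h).trans ?_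
      obtain ⟨e, rfl⟩ : ∃ e, k = e + 1 := ⟨k-1, by omega⟩
      exact dd_succ_lt hA e
    · have : j = k := by omega
      subst this
      obtain ⟨e, rfl⟩ : ∃ e, j = e + 1 := ⟨j-1, by omega⟩
      exact dd_succ_lt hA e

lemma dd_le {j k : ℕ} (hj : 1 ≤ j) (hjk : j ≤ k) : dd a j ≤ dd a k := by
  rcases Nat.lt_or_ge j k with h | h
  · exact (dd_lt hA hj h).le
  · have : j = k := by omega
    simp [this]

omit hA in
lemma gg_one : gg a 1 = 0 := by simp only [gg, ff]; push_cast; ring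
omit hA in
lemma gg_two : gg a 2 = 0 := by simp only [gg, ff]; push_cast; ring

omit hA in
lemma gg_succ (d : ℕ) : gg a (d+1) = gg a d + (dd a d - dd a 1) := by
  simp only [gg, dd, ff]
  push_cast
  ring

lemma gg_lt {j k : ℕ} (hj : 2 ≤ j) (hjk : j < k) : gg a j < gg a k := by
  induction k with
  | zero => omega
  | succ k ih =>
    have hd : dd a 1 < dd a k := dd_lt hA le_rfl (by omega)
    rcases Nat.lt_or_ge j k with h | h
    · have := ih h
      rw [gg_succ k]; linarith
    · have : j = k := by omega
      subst this
      rw [gg_succ j]; linarith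

lemma gg_le {j k : ℕ} (hj : 2 ≤ j) (hjk : j ≤ k) : gg a j ≤ gg a k := by
  rcases Nat.lt_or_ge j k with h | h
  · exact (gg_lt hA hj h).le
  · have : j = k := by omega
    simp [this]

lemma gg_nonneg {d : ℕ} (hd : 1 ≤ d) : 0 ≤ gg a d := by
  rcases Nat.lt_or_ge d 2 with h | h
  · have : d = 1 := by omega
    simp [this, gg_one]
  · rw [← gg_two (a := a)]
    exact gg_le hA le_rfl h

lemma gg_pos {d : ℕ} (hd : 3 ≤ d) : 0 < gg a d := by
  rw [← gg_two (a := a)]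
  exact gg_lt hA le_rfl (by omega)

lemma gg_eq_zero_iff {d : ℕ} (hd : 1 ≤ d) : gg a d = 0 ↔ d ≤ 2 := by
  constructor
  · intro h
    by_contra hc
    exact absurd h (ne_of_gt (gg_pos hA (by omega)))
  · intro h
    interval_cases d
    · exact gg_one
    · exact gg_two

lemma superadd (x c : ℕ) (hx : 2 ≤ x) : gg a x + gg a (c+2) ≤ gg a (x+c) := by
  induction c with
  | zero => simp [gg_two]
  | succ c ih =>
    have h1 : dd a (c+2) ≤ dd a (x+c) := dd_le hA (by omega) (by omega)
    rw [show c+1+2 = (c+2)+1 by ring, gg_succ (c+2),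
        show x+(c+1) = (x+c)+1 by ring, gg_succ (x+c)]
    linarith

lemma superadd_strict (x c : ℕ) (hx : 3 ≤ x) (hc : 1 ≤ c) :
    gg a x + gg a (c+2) < gg a (x+c) := by
  induction c with
  | zero => omega
  | succ c ih =>
    rcases Nat.eq_zero_or_pos c with rfl | hc'
    · have h1 : dd a 2 < dd a x := dd_lt hA (by omega) (by omega)
      rw [show 0+1+2 = 2+1 by ring, gg_succ 2, show x+(0+1) = x+1 by ring, gg_succ x,
          gg_two]
      linarith
    · have h1 : dd a (c+2) ≤ dd a (x+c) := dd_le hA (by omega) (by omega)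
      have := ih hc'
      rw [show c+1+2 = (c+2)+1 by ring, gg_succ (c+2),
          show x+(c+1) = (x+c)+1 by ring, gg_succ (x+c)]
      linarith

lemma sum_gg_le {V : Type*} [DecidableEq V] (d : V → ℕ) (S : Finset V) (hS : S.Nonempty) :
    (∀ u ∈ S, 2 ≤ d u) →
    ∃ t, 2 ≤ t ∧ t + 2 * S.card = (∑ u ∈ S, d u) + 2 ∧
      ∑ u ∈ S, gg a (d u) ≤ gg a t := by
  induction hS using Finset.Nonempty.cons_induction with
  | singleton u => intro h; exact ⟨d u, h u (by simp), by simp [mul_comm], by simp⟩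
  | cons u S hu hS ih =>
    intro h
    obtain ⟨t, ht2, htsum, htle⟩ := ih (fun w hw => h w (Finset.mem_cons.2 (Or.inr hw)))
    obtain ⟨c, rfl⟩ : ∃ c, t = c + 2 := ⟨t - 2, by omega⟩
    have hdu : 2 ≤ d u := h u (Finset.mem_cons_self u S)
    refine ⟨d u + c, by omega, ?_, ?_⟩
    · rw [Finset.sum_cons, Finset.card_cons]
      omega
    · rw [Finset.sum_cons]
      calc gg a (d u) + ∑ w ∈ S, gg a (d w) ≤ gg a (d u) + gg a (c+2) := by linarith
        _ ≤ gg a (d u + c) := superadd hA _ _ hdu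

lemma pair_contra {x y z n : ℕ} (hx : 3 ≤ x) (hy : 3 ≤ y) (hz : 2 ≤ z)
    (hsum : x + y + z = n + 3) (hn : 4 ≤ n) :
    gg a x + gg a y + gg a z < gg a (n-1) := by
  have h1 : gg a x + gg a y < gg a (x + y - 2) := by
    have := superadd_strict hA x (y - 2) hx (by omega)
    rw [show (y-2)+2 = y by omega, show x + (y-2) = x + y - 2 by omega] at this
    exact this
  have h2 : gg a (x+y-2) + gg a z ≤ gg a (n-1) := by
    have := superadd hA (x+y-2) (z-2) (by omega)
    rw [show (z-2)+2 = z by omega, show x+y-2+(z-2) = n - 1 by omega] at this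
    exact this
  linarith

/-! ### Walk helpers -/

open SimpleGraph.Walk

variable {V : Type*} [DecidableEq V] {G : SimpleGraph V} {u v w : V}

omit hA

omit [DecidableEq V] in
lemma support_get (p : G.Walk u v) : ∀ (i : ℕ) (h : i < p.support.length),
    p.support.get ⟨i, h⟩ = p.getVert i := by
  induction p with
  | nil =>
    intro i h
    simp only [support_nil, List.length_singleton] at h
    interval_cases i
    simp
  | cons hadj q ih =>
    intro i h
    cases i with
    | zero => simp
    | succ i =>
      have h' : i < q.support.length := by
        simp only [support_cons, List.length_cons] at h
        omega
      simp only [support_cons, List.get_cons_succ]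
      exact ih i h'

omit [DecidableEq V] in
lemma getVert_inj {p : G.Walk u v} (hnd : p.support.tail.Nodup)
    {i j : ℕ} (hi1 : 1 ≤ i) (hi : i ≤ p.length) (hj1 : 1 ≤ j) (hj : j ≤ p.length)
    (hij : p.getVert i = p.getVert j) : i = j := by
  have hl : p.support.tail.length = p.length := by simp [length_support]
  have hi' : i - 1 < p.support.tail.length := by omega
  have hj' : j - 1 < p.support.tail.length := by omega
  have e1 : p.support.tail.get ⟨i - 1, hi'⟩ = p.getVert i := by
    rw [List.get_tail]
    · rw [support_get]
      congr 1
      omega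
  have e2 : p.support.tail.get ⟨j - 1, hj'⟩ = p.getVert j := by
    rw [List.get_tail]
    · rw [support_get]
      congr 1
      omega
  have := (hnd.get_inj_iff (i := ⟨i-1, hi'⟩) (j := ⟨j-1, hj'⟩)).mp (by rw [e1, e2, hij])
  have := Fin.mk.injEq _ _ _ _ ▸ this
  omega

omit [DecidableEq V] in
lemma getVert_mem_tail (p : G.Walk u v) {i : ℕ} (hi1 : 1 ≤ i) (hi : i ≤ p.length) :
    p.getVert i ∈ p.support.tail := by
  have hl : p.support.tail.length = p.length := by simp [length_support]
  have hi' : i - 1 < p.support.tail.length := by omega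
  have e1 : p.support.tail.get ⟨i - 1, hi'⟩ = p.getVert i := by
    rw [List.get_tail]
    · rw [support_get]
      congr 1
      omega
  rw [← e1]
  exact List.get_mem _ _

/-- every vertex on a cycle has degree ≥ 2 -/
lemma two_le_degree_of_mem_cycle [Fintype V] [DecidableRel G.Adj]
    {c : G.Walk v v} (hc : c.IsCycle) (hu : u ∈ c.support) : 2 ≤ G.degree u := by
  set d := c.rotate u hu with hd
  have hdc : d.IsCycle := hc.rotate hu
  have hlen : d.length = c.length := by
    have := congr_arg Walk.length (c.take_spec hu)
    simp only [length_append] at this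
    simp only [hd, SimpleGraph.Walk.rotate, length_append]
    omega
  have h3 : 3 ≤ d.length := hdc.three_le_length
  have hadj1 : G.Adj u (d.getVert 1) := by
    have := d.adj_getVert_succ (i := 0) (by omega)
    simpa using this
  have hadj2 : G.Adj u (d.getVert (d.length - 1)) := by
    have := d.adj_getVert_succ (i := d.length - 1) (by omega)
    rw [show d.length - 1 + 1 = d.length by omega, d.getVert_length] at this
    exact this.symm
  have hne : d.getVert 1 ≠ d.getVert (d.length - 1) := by
    intro hcon
    have := getVert_inj hdc.2 (by omega) (by omega) (by omega) (by omega) hcon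
    omega
  have hsub : ({d.getVert 1, d.getVert (d.length - 1)} : Finset V) ⊆ G.neighborFinset u := by
    intro x hx
    simp only [Finset.mem_insert, Finset.mem_singleton] at hx
    rcases hx with rfl | rfl <;> simp [SimpleGraph.mem_neighborFinset, hadj1, hadj2]
  calc 2 = ({d.getVert 1, d.getVert (d.length - 1)} : Finset V).card := (Finset.card_pair hne).symm
    _ ≤ (G.neighborFinset u).card := Finset.card_le_card hsub
    _ = G.degree u := G.card_neighborFinset_eq_degree u

/-- The two neighbors of a vertex on a cycle, in a graph where it has degree 2. -/
lemma cycle_nbhd [Fintype V] [DecidableRel G.Adj] {c : G.Walk v v} (hc : c.IsCycle)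
    (hu : u ∈ c.support) (hdeg : G.degree u = 2) :
    ∃ x1 x2, x1 ≠ x2 ∧ x1 ∈ c.support ∧ x2 ∈ c.support ∧
      G.neighborFinset u = {x1, x2} := by
  set d := c.rotate u hu with hd
  have hdc : d.IsCycle := hc.rotate hu
  have hlen : d.length = c.length := by
    have := congr_arg Walk.length (c.take_spec hu)
    simp only [length_append] at this
    simp only [hd, SimpleGraph.Walk.rotate, length_append]
    omega
  have h3 : 3 ≤ d.length := hdc.three_le_length
  have hadj1 : G.Adj u (d.getVert 1) := by
    have := d.adj_getVert_succ (i := 0) (by omega)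
    simpa using this
  have hadj2 : G.Adj u (d.getVert (d.length - 1)) := by
    have := d.adj_getVert_succ (i := d.length - 1) (by omega)
    rw [show d.length - 1 + 1 = d.length by omega, d.getVert_length] at this
    exact this.symm
  have hne : d.getVert 1 ≠ d.getVert (d.length - 1) := by
    intro hcon
    have := getVert_inj hdc.2 (by omega) (by omega) (by omega) (by omega) hcon
    omega
  have hmem : ∀ i : ℕ, 1 ≤ i → i ≤ d.length → d.getVert i ∈ c.support := by
    intro i h1 h2
    have ht : d.getVert i ∈ d.support.tail := getVert_mem_tail d h1 h2
    have hrot := SimpleGraph.Walk.support_rotate c u hu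
    have : d.getVert i ∈ c.support.tail := (hrot.mem_iff).mp ht
    exact List.mem_of_mem_tail this
  have hsub : ({d.getVert 1, d.getVert (d.length - 1)} : Finset V) ⊆ G.neighborFinset u := by
    intro x hx
    simp only [Finset.mem_insert, Finset.mem_singleton] at hx
    rcases hx with rfl | rfl <;> simp [SimpleGraph.mem_neighborFinset, hadj1, hadj2]
  have hcard : ({d.getVert 1, d.getVert (d.length - 1)} : Finset V).card = 2 :=
    Finset.card_pair hne
  have heq : G.neighborFinset u = {d.getVert 1, d.getVert (d.length - 1)} :=
    (Finset.eq_of_subset_of_card_le hsub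
      (by rw [hcard, SimpleGraph.card_neighborFinset_eq_degree, hdeg])).symm
  exact ⟨_, _, hne, hmem 1 (by omega) (by omega), hmem (d.length - 1) (by omega) (by omega), heq⟩

/-! ### The cycle isomorphism -/

lemma iso_cycle {n : ℕ} (hn : 4 ≤ n) (G : SimpleGraph (Fin n)) [DecidableRel G.Adj]
    (hconn : G.Connected) (hreg : ∀ u, G.degree u = 2)
    {v : Fin n} (c : G.Walk v v) (hc : c.IsCycle) :
    Nonempty (G ≃g SimpleGraph.cycleGraph n) := by
  haveI : NeZero n := ⟨by omega⟩
  have h1v : ((1 : Fin n)).val = 1 := by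
    rw [Fin.val_one', Nat.mod_eq_of_lt (by omega)]
  have hclosure : ∀ u ∈ c.support, ∀ w, G.Adj u w → w ∈ c.support := by
    intro u hu w hw
    obtain ⟨x1, x2, hne, hx1, hx2, hnb⟩ := cycle_nbhd hc hu (hreg u)
    have : w ∈ G.neighborFinset u := by simpa [SimpleGraph.mem_neighborFinset] using hw
    rw [hnb] at this
    simp only [Finset.mem_insert, Finset.mem_singleton] at this
    rcases this with rfl | rfl <;> assumption
  have hcover : ∀ w : Fin n, w ∈ c.support := by
    intro w
    have hreach : G.Reachable v w := hconn.preconnected v w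
    obtain ⟨p⟩ := hreach
    have : ∀ {x y : Fin n} (p : G.Walk x y), x ∈ c.support → y ∈ c.support := by
      intro x y p
      induction p with
      | nil => exact id
      | cons h q ih => exact fun hx => ih (hclosure _ hx _ h)
    exact this p (c.start_mem_support)
  have hL : c.length = n := by
    have hnd : c.support.tail.Nodup := hc.2
    have htlen : c.support.tail.length = c.length := by simp [length_support]
    have hsub : c.support.tail.toFinset ⊆ Finset.univ := Finset.subset_univ _
    have hcard1 : c.support.tail.toFinset.card = c.length := by
      rw [List.toFinset_card_of_nodup hnd, htlen]
    have h3 : 3 ≤ c.length := hc.three_le_length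
    have hsup : Finset.univ ⊆ c.support.tail.toFinset := by
      intro w _
      rw [List.mem_toFinset]
      have hw := hcover w
      rw [mem_support_iff_exists_getVert] at hw
      obtain ⟨i, hgi, hile⟩ := hw
      rcases Nat.eq_zero_or_pos i with rfl | hipos
      · rw [getVert_zero] at hgi
        have hv : c.getVert c.length = w := by rw [getVert_length]; exact hgi
        rw [← hv]
        exact getVert_mem_tail c (by omega) le_rfl
      · rw [← hgi]
        exact getVert_mem_tail c hipos hile
    have := Finset.card_le_card hsub
    have := Finset.card_le_card hsup
    simp only [hcard1, Finset.card_univ, Fintype.card_fin] at *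
    omega
  set ψ : Fin n → Fin n := fun i => c.getVert i.val with hψ
  have hinj : Function.Injective ψ := by
    intro i j hij
    simp only [hψ] at hij
    have hiv : i.val < n := i.isLt
    have hjv : j.val < n := j.isLt
    rcases Nat.eq_zero_or_pos i.val with hi0 | hipos
    · rcases Nat.eq_zero_or_pos j.val with hj0 | hjpos
      · exact Fin.ext (by omega)
      · exfalso
        rw [hi0, getVert_zero] at hij
        have heq2 : c.getVert c.length = c.getVert j.val := by
          rw [getVert_length]; exact hij
        have := getVert_inj hc.2 (by omega) le_rfl (by omega) (by omega) heq2
        omega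
    · rcases Nat.eq_zero_or_pos j.val with hj0 | hjpos
      · exfalso
        rw [hj0, getVert_zero] at hij
        have heq2 : c.getVert i.val = c.getVert c.length := by
          rw [getVert_length]; exact hij
        have := getVert_inj hc.2 (by omega) (by omega) (by omega) le_rfl heq2
        omega
      · exact Fin.ext (getVert_inj hc.2 (by omega) (by omega) (by omega) (by omega) hij)
  have hadjsucc : ∀ i : Fin n, G.Adj (ψ i) (ψ (i + 1)) := by
    intro i
    have hiv : i.val < n := i.isLt
    rcases Nat.lt_or_ge (i.val + 1) n with hlt | hge
    · have hvala : (i + 1).val = (i.val + (1 : Fin n).val) % n := by rw [Fin.add_def]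
      rw [h1v, Nat.mod_eq_of_lt (by omega)] at hvala
      simp only [hψ, hvala]
      exact c.adj_getVert_succ (by omega)
    · have hival : i.val = n - 1 := by omega
      have hvala : (i + 1).val = (i.val + (1 : Fin n).val) % n := by rw [Fin.add_def]
      rw [h1v] at hvala
      have hval : (i + 1).val = 0 := by
        rw [hvala, hival, show n - 1 + 1 = n by omega, Nat.mod_self]
      have hadj : G.Adj (c.getVert (n-1)) (c.getVert n) := by
        have := c.adj_getVert_succ (i := n - 1) (by omega)
        rwa [show n - 1 + 1 = n by omega] at this
      have hgn : c.getVert n = v := by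
        have := getVert_length c
        rwa [hL] at this
      simp only [hψ, hval, getVert_zero, hival]
      rw [hgn] at hadj
      exact hadj
  have hadjiff : ∀ i j : Fin n, G.Adj (ψ i) (ψ j) ↔ (SimpleGraph.cycleGraph n).Adj i j := by
    intro i j
    constructor
    · intro hadj
      have hsucc1 : G.Adj (ψ i) (ψ (i+1)) := hadjsucc i
      have hsucc2 : G.Adj (ψ i) (ψ (i-1)) := by
        have := hadjsucc (i - 1)
        rw [sub_add_cancel] at this
        exact this.symm
      have hnedif : i + 1 ≠ i - 1 := by
        intro hne
        have e1 : (i + 1) - i + 1 = (i - 1) - i + 1 := by rw [hne]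
        rw [add_sub_cancel_left] at e1
        have e2 : i - 1 - i + 1 = 0 := by abel
        rw [e2] at e1
        have e3 : ((1:Fin n)+1).val = (0 : Fin n).val := by rw [e1]
        have e4 : (1 % n + 1 % n) % n = 0 := by simpa [Fin.add_def, Fin.val_one'] using e3
        have e5 : (1:ℕ) % n = 1 := Nat.mod_eq_of_lt (by omega)
        rw [e5, Nat.mod_eq_of_lt (by omega)] at e4
        omega
      have hnb : G.neighborFinset (ψ i) = {ψ (i+1), ψ (i-1)} := by
        refine (Finset.eq_of_subset_of_card_le ?_ ?_).symm
        · intro x hx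
          simp only [Finset.mem_insert, Finset.mem_singleton] at hx
          rcases hx with rfl | rfl <;>
            simp [SimpleGraph.mem_neighborFinset, hsucc1, hsucc2]
        · rw [Finset.card_pair (fun hcon => hnedif (hinj hcon)),
            SimpleGraph.card_neighborFinset_eq_degree, hreg]
      have : ψ j ∈ G.neighborFinset (ψ i) := by
        simpa [SimpleGraph.mem_neighborFinset] using hadj
      rw [hnb] at this
      simp only [Finset.mem_insert, Finset.mem_singleton] at this
      rw [SimpleGraph.cycleGraph_adj']
      rcases this with h | h
      · have : j = i + 1 := hinj h
        right
        rw [this, add_sub_cancel_left, h1v]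
      · have : j = i - 1 := hinj h
        left
        rw [this, sub_sub_cancel, h1v]
    · intro hadj
      rw [SimpleGraph.cycleGraph_adj'] at hadj
      rcases hadj with h | h
      · have : i - j = 1 := Fin.ext (by rw [h1v, h])
        have hij : i = j + 1 := by
          rw [← this]; abel
        rw [hij]
        exact (hadjsucc j).symm
      · have : j - i = 1 := Fin.ext (by rw [h1v, h])
        have hij : j = i + 1 := by
          rw [← this]; abel
        rw [hij]
        exact hadjsucc i
  have hbij : Function.Bijective ψ := (Finite.injective_iff_bijective).mp hinj
  exact ⟨(RelIso.mk (Equiv.ofBijective ψ hbij) (fun {i j} => hadjiff i j) :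
    SimpleGraph.cycleGraph n ≃g G).symm⟩

/-! ### The star graph -/

instance starDec (n : ℕ) : DecidableRel (unicyclicStar n).Adj := fun i j =>
  decidable_of_iff _
    ((SimpleGraph.fromRel_adj (fun i j : Fin n => i.val = 0 ∨ (i.val = 1 ∧ j.val = 2)) i j).symm)

lemma star_adj {n : ℕ} (i j : Fin n) : (unicyclicStar n).Adj i j ↔
    i ≠ j ∧ (i.val = 0 ∨ j.val = 0 ∨ (i.val = 1 ∧ j.val = 2) ∨ (j.val = 1 ∧ i.val = 2)) := by
  rw [unicyclicStar, SimpleGraph.fromRel_adj]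
  tauto

lemma star_degree {n : ℕ} (hn : 4 ≤ n) (u : Fin n) :
    (unicyclicStar n).degree u = if u.val = 0 then n - 1 else if u.val ≤ 2 then 2 else 1 := by
  have hne : ∀ (i j : Fin n), i.val ≠ j.val → i ≠ j := fun i j h hc => h (by rw [hc])
  rw [← SimpleGraph.card_neighborFinset_eq_degree, SimpleGraph.neighborFinset_eq_filter]
  by_cases h0 : u.val = 0
  · rw [if_pos h0]
    have : Finset.filter ((unicyclicStar n).Adj u) Finset.univ = Finset.univ.erase u := by
      ext w
      simp only [Finset.mem_filter, Finset.mem_univ, true_and, Finset.mem_erase, and_true]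
      rw [star_adj]
      constructor
      · rintro ⟨h, _⟩ ; exact fun hc => h hc.symm
      · intro h; exact ⟨fun hc => h hc.symm, Or.inl h0⟩
    rw [this, Finset.card_erase_of_mem (Finset.mem_univ u), Finset.card_univ, Fintype.card_fin]
  · by_cases h1 : u.val = 1
    · rw [if_neg h0, if_pos (by omega)]
      have : Finset.filter ((unicyclicStar n).Adj u) Finset.univ
          = {(⟨0, by omega⟩ : Fin n), ⟨2, by omega⟩} := by
        ext w
        simp only [Finset.mem_filter, Finset.mem_univ, true_and, Finset.mem_insert,
          Finset.mem_singleton, Fin.ext_iff]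
        rw [star_adj]
        constructor
        · rintro ⟨hne', h⟩
          rw [ne_eq, Fin.ext_iff] at hne'
          omega
        · intro h
          refine ⟨hne u w (by omega), ?_⟩
          omega
      rw [this, Finset.card_insert_of_notMem (by simp [Fin.ext_iff]), Finset.card_singleton]
    · by_cases h2 : u.val = 2
      · rw [if_neg h0, if_pos (by omega)]
        have : Finset.filter ((unicyclicStar n).Adj u) Finset.univ
            = {(⟨0, by omega⟩ : Fin n), ⟨1, by omega⟩} := by
          ext w
          simp only [Finset.mem_filter, Finset.mem_univ, true_and, Finset.mem_insert,
            Finset.mem_singleton, Fin.ext_iff]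
          rw [star_adj]
          constructor
          · rintro ⟨hne', h⟩
            rw [ne_eq, Fin.ext_iff] at hne'
            omega
          · intro h
            refine ⟨hne u w (by omega), ?_⟩
            omega
        rw [this, Finset.card_insert_of_notMem (by simp [Fin.ext_iff]), Finset.card_singleton]
      · rw [if_neg h0, if_neg (by omega)]
        have : Finset.filter ((unicyclicStar n).Adj u) Finset.univ
            = {(⟨0, by omega⟩ : Fin n)} := by
          ext w
          simp only [Finset.mem_filter, Finset.mem_univ, true_and, Finset.mem_singleton,
            Fin.ext_iff]
          rw [star_adj]
          constructor
          · rintro ⟨hne', h⟩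
            omega
          · intro h
            refine ⟨hne u w (by omega), ?_⟩
            omega
        rw [this, Finset.card_singleton]

lemma star_sum {n : ℕ} (hn : 4 ≤ n) (a : ℝ) :
    ∑ u : Fin n, ff a ((unicyclicStar n).degree u)
      = ff a (n-1) + 2 * ff a 2 + ((n:ℝ) - 3) * ff a 1 := by
  have hF : ∀ u : Fin n, ff a ((unicyclicStar n).degree u)
      = (fun i : ℕ => if i = 0 then ff a (n-1) else if i ≤ 2 then ff a 2 else ff a 1) u.val := by
    intro u
    rw [star_degree hn u]
    by_cases h0 : u.val = 0
    · simp [h0]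
    · by_cases h2 : u.val ≤ 2 <;> simp [h0, h2]
  calc ∑ u : Fin n, ff a ((unicyclicStar n).degree u)
      = ∑ u : Fin n, (fun i : ℕ => if i = 0 then ff a (n-1) else if i ≤ 2 then ff a 2 else ff a 1) u.val :=
        Finset.sum_congr rfl (fun u _ => hF u)
    _ = ∑ i ∈ Finset.range n, (fun i : ℕ => if i = 0 then ff a (n-1) else if i ≤ 2 then ff a 2 else ff a 1) i :=
        Fin.sum_univ_eq_sum_range (fun i : ℕ => if i = 0 then ff a (n-1) else if i ≤ 2 then ff a 2 else ff a 1) n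
    _ = ff a (n-1) + 2 * ff a 2 + ((n:ℝ) - 3) * ff a 1 := ?_
  rw [Finset.range_eq_Ico, ← Finset.sum_Ico_consecutive _ (by omega : 0 ≤ 3) (by omega : 3 ≤ n)]
  have h1 : ∑ i ∈ Finset.Ico 0 3,
      (if i = 0 then ff a (n-1) else if i ≤ 2 then ff a 2 else ff a 1)
      = ff a (n-1) + 2 * ff a 2 := by
    rw [← Finset.range_eq_Ico]
    simp [Finset.sum_range_succ]
    ring
  have h2 : ∑ i ∈ Finset.Ico 3 n,
      (if i = 0 then ff a (n-1) else if i ≤ 2 then ff a 2 else ff a 1)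
      = ((n:ℝ) - 3) * ff a 1 := by
    rw [Finset.sum_congr rfl (fun i hi => ?_), Finset.sum_const, Nat.card_Ico]
    · rw [nsmul_eq_mul]
      congr 1
      have : (3:ℕ) ≤ n := by omega
      push_cast [Nat.cast_sub this]
      ring
    · have := Finset.mem_Ico.1 hi
      rw [if_neg (by omega), if_neg (by omega)]
  rw [h1, h2]

/-! ### The star isomorphism -/

lemma iso_star {n : ℕ} (hn : 4 ≤ n) (G : SimpleGraph (Fin n)) (v x y : Fin n)
    (hxv : x ≠ v) (hyv : y ≠ v) (hxy : x ≠ y)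
    (hchar : ∀ u w, G.Adj u w ↔
      (u ≠ w ∧ (u = v ∨ w = v ∨ (u = x ∧ w = y) ∨ (u = y ∧ w = x)))) :
    Nonempty (G ≃g unicyclicStar n) := by
  set z0 : Fin n := ⟨0, by omega⟩ with hz0
  set z1 : Fin n := ⟨1, by omega⟩ with hz1
  set z2 : Fin n := ⟨2, by omega⟩ with hz2
  have h01 : z0 ≠ z1 := by simp [hz0, hz1, Fin.ext_iff]
  have h02 : z0 ≠ z2 := by simp [hz0, hz2, Fin.ext_iff]
  have h12 : z1 ≠ z2 := by simp [hz1, hz2, Fin.ext_iff]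
  set t1 : Equiv.Perm (Fin n) := Equiv.swap v z0 with ht1
  set t2 : Equiv.Perm (Fin n) := Equiv.swap (t1 x) z1 with ht2
  set t3 : Equiv.Perm (Fin n) := Equiv.swap (t2 (t1 y)) z2 with ht3
  set σ : Equiv.Perm (Fin n) := (t1.trans t2).trans t3 with hσ
  have ht1v : t1 v = z0 := Equiv.swap_apply_left v z0
  have hb0 : t1 x ≠ z0 := by
    rw [← ht1v]
    exact fun h => hxv (t1.injective h)
  have hσv : σ v = z0 := by
    simp only [hσ, Equiv.trans_apply, ht1v]
    rw [ht2, Equiv.swap_apply_of_ne_of_ne hb0.symm h01]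
    rw [ht3, Equiv.swap_apply_of_ne_of_ne _ h02]
    intro h
    apply hyv
    apply t1.injective
    apply t2.injective
    rw [← h, ht1v, ht2, Equiv.swap_apply_of_ne_of_ne hb0.symm h01]
  have hσx : σ x = z1 := by
    simp only [hσ, Equiv.trans_apply]
    rw [ht2, Equiv.swap_apply_left]
    rw [ht3, Equiv.swap_apply_of_ne_of_ne _ h12]
    intro h
    apply hxy
    apply t1.injective
    apply t2.injective
    rw [← h, ht2, Equiv.swap_apply_left]
  have hσy : σ y = z2 := by
    simp only [hσ, Equiv.trans_apply]
    exact Equiv.swap_apply_left _ _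
  have hval : ∀ u : Fin n, ((σ u).val = 0 ↔ u = v) ∧ ((σ u).val = 1 ↔ u = x)
      ∧ ((σ u).val = 2 ↔ u = y) := by
    intro u
    refine ⟨⟨fun h => ?_, fun h => by rw [h, hσv]⟩,
      ⟨fun h => ?_, fun h => by rw [h, hσx]⟩,
      ⟨fun h => ?_, fun h => by rw [h, hσy]⟩⟩
    · exact σ.injective (by rw [hσv]; exact Fin.ext h)
    · exact σ.injective (by rw [hσx]; exact Fin.ext h)
    · exact σ.injective (by rw [hσy]; exact Fin.ext h)
  refine ⟨RelIso.mk σ ?_⟩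
  intro u w
  rw [star_adj, hchar]
  obtain ⟨hu0, hu1, hu2⟩ := hval u
  obtain ⟨hw0, hw1, hw2⟩ := hval w
  have hinj : σ u ≠ σ w ↔ u ≠ w := by
    constructor
    · intro h hc; exact h (by rw [hc])
    · intro h hc; exact h (σ.injective hc)
  rw [hinj, hu0, hu1, hu2, hw0, hw1, hw2]
  exact and_congr Iff.rfl (or_congr Iff.rfl (or_congr Iff.rfl (or_congr Iff.rfl and_comm)))

/-! ### Misc graph lemmas -/

lemma iso_degree {V W : Type*} [Fintype V] [Fintype W] {G : SimpleGraph V}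
    {H : SimpleGraph W} [DecidableRel G.Adj] [DecidableRel H.Adj]
    (e : G ≃g H) (u : V) : H.degree (e u) = G.degree u := by
  rw [← SimpleGraph.card_neighborSet_eq_degree, ← SimpleGraph.card_neighborSet_eq_degree]
  exact (Fintype.card_congr (e.mapNeighborSet u)).symm

lemma cycle_degree {n : ℕ} (hn : 4 ≤ n) (w : Fin n) :
    (SimpleGraph.cycleGraph n).degree w = 2 := by
  obtain ⟨m, rfl⟩ : ∃ m, n = m + 3 := ⟨n - 3, by omega⟩
  exact SimpleGraph.cycleGraph_degree_three_le

end SEIaux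

open SEIaux

theorem stmt10 {n : ℕ} (hn : 4 ≤ n) (G : SimpleGraph (Fin n)) [DecidableRel G.Adj]
    (hG : IsUnicyclic G) (a : ℝ) (ha : 1 < a ∨ (0 < a ∧ a ≤ Real.exp (-2))) :
    (2 * (n : ℝ) * a ^ 2 ≤ ∑ u : Fin n, (G.degree u : ℝ) * a ^ (G.degree u)) ∧
    (∑ u : Fin n, (G.degree u : ℝ) * a ^ (G.degree u) ≤
      ((n : ℝ) - 1) * a ^ (n - 1) + 4 * a ^ 2 + ((n : ℝ) - 3) * a) ∧
    ((∑ u : Fin n, (G.degree u : ℝ) * a ^ (G.degree u) = 2 * (n : ℝ) * a ^ 2) ↔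
      Nonempty (G ≃g SimpleGraph.cycleGraph n)) ∧
    ((∑ u : Fin n, (G.degree u : ℝ) * a ^ (G.degree u) =
        ((n : ℝ) - 1) * a ^ (n - 1) + 4 * a ^ 2 + ((n : ℝ) - 3) * a) ↔
      Nonempty (G ≃g unicyclicStar n)) := by
  classical
  obtain ⟨hconn, hedge⟩ := hG
  have hA : 1 < a ∨ (0 < a ∧ 3 * a < 1) := by
    rcases ha with h | ⟨h1, h2⟩
    · exact Or.inl h
    · refine Or.inr ⟨h1, ?_⟩
      have h3 : (3:ℝ) < Real.exp 2 := by
        have := Real.add_one_lt_exp (x := 2) (by norm_num)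
        linarith
      have h4 : Real.exp (-2) < 1/3 := by
        rw [Real.exp_neg]
        rw [inv_lt_comm₀ (by positivity) (by norm_num)]
        simpa using h3
      linarith
  have hsum : ∑ u : Fin n, G.degree u = 2 * n := by
    rw [SimpleGraph.sum_degrees_eq_twice_card_edges, hedge]
  have hd1 : ∀ u : Fin n, 1 ≤ G.degree u := by
    intro u
    have hex : ∃ w : Fin n, w ≠ u := by
      have hu := u.isLt
      rcases Nat.lt_or_ge (u.val + 1) n with h | h
      · refine ⟨⟨u.val + 1, h⟩, ?_⟩
        simp only [ne_eq, Fin.ext_iff]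
        omega
      · refine ⟨⟨0, by omega⟩, ?_⟩
        simp only [ne_eq, Fin.ext_iff]
        omega
    obtain ⟨w, hw⟩ := hex
    obtain ⟨p⟩ := hconn.preconnected u w
    have hnn : ¬ p.Nil := SimpleGraph.Walk.not_nil_of_ne (Ne.symm hw)
    have : G.Adj u (p.getVert 1) := SimpleGraph.Walk.adj_snd hnn
    exact (G.degree_pos_iff_exists_adj u).mpr ⟨_, this⟩
  have hdlt : ∀ u : Fin n, G.degree u ≤ n - 1 := by
    intro u
    have := G.degree_lt_card_verts u
    rw [Fintype.card_fin] at this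
    omega
  -- a cycle exists
  have hnotacyc : ¬ G.IsAcyclic := by
    intro hac
    have ht : G.IsTree := ⟨hconn, hac⟩
    have := ht.card_edgeFinset
    rw [hedge, Fintype.card_fin] at this
    omega
  rw [SimpleGraph.IsAcyclic] at hnotacyc
  push_neg at hnotacyc
  obtain ⟨v0, c, hc⟩ := hnotacyc
  -- the set of vertices of degree at least 2
  set S : Finset (Fin n) := Finset.univ.filter (fun u => 2 ≤ G.degree u) with hS
  have hSmem : ∀ u, u ∈ S ↔ 2 ≤ G.degree u := by
    intro u
    simp [hS]
  have hS3 : 3 ≤ S.card := by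
    have hsub : c.support.tail.toFinset ⊆ S := by
      intro w hw
      rw [List.mem_toFinset] at hw
      rw [hSmem]
      exact two_le_degree_of_mem_cycle hc (List.mem_of_mem_tail hw)
    have hcard : c.support.tail.toFinset.card = c.length := by
      rw [List.toFinset_card_of_nodup hc.2]
      simp [SimpleGraph.Walk.length_support]
    have := Finset.card_le_card hsub
    have h3 := hc.three_le_length
    omega
  have hSn : S.card ≤ n := by
    have := Finset.card_le_card (Finset.subset_univ S)
    simpa using this
  have hScompl : ∀ u, u ∉ S → G.degree u = 1 := by
    intro u hu
    rw [hSmem] at hu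
    have := hd1 u
    omega
  have hSsum : ∑ u ∈ S, G.degree u = n + S.card := by
    have h1 := Finset.sum_add_sum_compl S (fun u => G.degree u)
    have h2 : ∑ u ∈ Sᶜ, G.degree u = Sᶜ.card := by
      rw [Finset.card_eq_sum_ones]
      exact Finset.sum_congr rfl (fun u hu => hScompl u (Finset.mem_compl.1 hu))
    have h3 : Sᶜ.card = n - S.card := by
      rw [Finset.card_compl]
      simp
    rw [h2, h3, hsum] at h1
    omega
  -- decompose the sum
  have hkey : ∑ u : Fin n, (G.degree u : ℝ) * a ^ (G.degree u)
      = 2 * n * a^2 + ∑ u : Fin n, gg a (G.degree u) := by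
    have hcast : ∑ u : Fin n, ((G.degree u : ℝ)) = 2*n := by
      rw [← Nat.cast_sum, hsum]
      push_cast
      ring
    have expand : ∀ u : Fin n, (G.degree u : ℝ) * a ^ (G.degree u)
        = gg a (G.degree u) + (2*a^2 + (2*a^2 - a) * ((G.degree u : ℝ) - 2)) := by
      intro u
      simp only [gg, ff]
      ring
    rw [Finset.sum_congr rfl (fun u _ => expand u), Finset.sum_add_distrib]
    rw [Finset.sum_add_distrib, Finset.sum_const, ← Finset.mul_sum]
    have : ∑ u : Fin n, ((G.degree u : ℝ) - 2) = 0 := by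
      rw [Finset.sum_sub_distrib, hcast, Finset.sum_const]
      simp [Finset.card_univ]
      ring
    rw [this, Finset.card_univ, Fintype.card_fin, nsmul_eq_mul]
    ring
  have hgS : ∑ u ∈ S, gg a (G.degree u) = ∑ u : Fin n, gg a (G.degree u) := by
    refine Finset.sum_subset (Finset.subset_univ S) (fun u _ hu => ?_)
    rw [hScompl u hu]
    exact gg_one
  have hglow : 0 ≤ ∑ u : Fin n, gg a (G.degree u) :=
    Finset.sum_nonneg (fun u _ => gg_nonneg hA (hd1 u))
  -- upper bound pieces
  obtain ⟨t, ht2, htid, htle⟩ := sum_gg_le hA (fun u => G.degree u) S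
    (Finset.card_pos.1 (by omega)) (fun u hu => (hSmem u).1 hu)
  have htn : t ≤ n - 1 := by
    rw [hSsum] at htid
    omega
  have hup : ∑ u : Fin n, gg a (G.degree u) ≤ gg a (n-1) := by
    rw [← hgS]
    exact htle.trans (gg_le hA ht2 htn)
  have htarget : ((n : ℝ) - 1) * a ^ (n - 1) + 4 * a ^ 2 + ((n : ℝ) - 3) * a
      = 2 * n * a^2 + gg a (n-1) := by
    simp only [gg, ff]
    have hcast : ((n - 1 : ℕ) : ℝ) = (n : ℝ) - 1 := by
      have : (1:ℕ) ≤ n := by omega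
      push_cast [Nat.cast_sub this]
      ring
    rw [hcast]
    ring
  have lower : 2 * (n : ℝ) * a ^ 2 ≤ ∑ u : Fin n, (G.degree u : ℝ) * a ^ (G.degree u) := by
    rw [hkey]
    linarith
  have upper : ∑ u : Fin n, (G.degree u : ℝ) * a ^ (G.degree u) ≤
      ((n : ℝ) - 1) * a ^ (n - 1) + 4 * a ^ 2 + ((n : ℝ) - 3) * a := by
    rw [hkey, htarget]
    linarith
  refine ⟨lower, upper, ?_, ?_⟩
  · -- lower equality iff cycle
    constructor
    · intro heq
      have hzero : ∑ u : Fin n, gg a (G.degree u) = 0 := by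
        rw [hkey] at heq
        linarith
      have hall : ∀ u : Fin n, gg a (G.degree u) = 0 := by
        intro u
        have := (Finset.sum_eq_zero_iff_of_nonneg
          (fun u _ => gg_nonneg hA (hd1 u))).1 hzero u (Finset.mem_univ u)
        exact this
      have hle2 : ∀ u : Fin n, G.degree u ≤ 2 := by
        intro u
        exact (gg_eq_zero_iff hA (hd1 u)).1 (hall u)
      have hreg : ∀ u : Fin n, G.degree u = 2 := by
        intro u
        by_contra hcon
        have hlt : G.degree u < 2 := by
          have := hle2 u
          omega
        have hsumlt : ∑ u : Fin n, G.degree u < ∑ u : Fin n, 2 :=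
          Finset.sum_lt_sum (fun i _ => hle2 i) ⟨u, Finset.mem_univ u, hlt⟩
        rw [hsum] at hsumlt
        simp only [Finset.sum_const, Finset.card_univ, Fintype.card_fin, smul_eq_mul] at hsumlt
        omega
      exact iso_cycle hn G hconn hreg c hc
    · rintro ⟨e⟩
      have hreg : ∀ u : Fin n, G.degree u = 2 := by
        intro u
        rw [← iso_degree e u, cycle_degree hn]
      have : ∀ u : Fin n, (G.degree u : ℝ) * a ^ (G.degree u) = 2 * a^2 := by
        intro u
        rw [hreg u]
        norm_num
      rw [Finset.sum_congr rfl (fun u _ => this u), Finset.sum_const, Finset.card_univ,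
        Fintype.card_fin, nsmul_eq_mul]
      ring
  · -- upper equality iff star
    constructor
    · intro heq
      have hggeq : ∑ u : Fin n, gg a (G.degree u) = gg a (n-1) := by
        rw [hkey] at heq
        rw [htarget] at heq
        linarith
      -- the chain of inequalities is tight
      have hteq : t = n - 1 := by
        by_contra hcon
        have htlt : t < n - 1 := by omega
        have : gg a t < gg a (n-1) := gg_lt hA ht2 htlt
        rw [← hgS] at hggeq
        linarith
      have hk3 : S.card = 3 := by
        rw [hSsum] at htid
        omega
      obtain ⟨p, q, r, hpq, hpr, hqr, hSpqr⟩ := Finset.card_eq_three.1 hk3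
      have hmemS : ∀ u, u ∈ S → 2 ≤ G.degree u := fun u hu => (hSmem u).1 hu
      have hp2 : 2 ≤ G.degree p := hmemS p (by rw [hSpqr]; simp)
      have hq2 : 2 ≤ G.degree q := hmemS q (by rw [hSpqr]; simp)
      have hr2 : 2 ≤ G.degree r := hmemS r (by rw [hSpqr]; simp)
      have hsum3 : G.degree p + G.degree q + G.degree r = n + 3 := by
        have := hSsum
        rw [hk3, hSpqr] at this
        rw [Finset.sum_insert (by simp [hpq, hpr]), Finset.sum_insert (by simp [hqr]),
          Finset.sum_singleton] at this
        omega
      have hgg3 : gg a (G.degree p) + gg a (G.degree q) + gg a (G.degree r) = gg a (n-1) := by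
        rw [← hgS] at hggeq
        rw [hSpqr] at hggeq
        rw [Finset.sum_insert (by simp [hpq, hpr]), Finset.sum_insert (by simp [hqr]),
          Finset.sum_singleton] at hggeq
        linarith
      -- at most one degree is ≥ 3
      have hbig : ∃ v : Fin n, G.degree v = n - 1 := by
        by_cases hp3 : 3 ≤ G.degree p
        · by_cases hq3 : 3 ≤ G.degree q
          · exfalso
            have := pair_contra hA hp3 hq3 hr2 hsum3 hn
            linarith
          · by_cases hr3 : 3 ≤ G.degree r
            · exfalso
              have := pair_contra hA hp3 hr3 hq2 (by omega) hn
              linarith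
            · exact ⟨p, by omega⟩
        · by_cases hq3 : 3 ≤ G.degree q
          · by_cases hr3 : 3 ≤ G.degree r
            · exfalso
              have := pair_contra hA hq3 hr3 hp2 (by omega) hn
              linarith
            · exact ⟨q, by omega⟩
          · by_cases hr3 : 3 ≤ G.degree r
            · exact ⟨r, by omega⟩
            · exfalso
              omega
      obtain ⟨v, hv⟩ := hbig
      -- v is adjacent to everything
      have hadjall : ∀ w, w ≠ v → G.Adj v w := by
        have hsub : G.neighborFinset v ⊆ Finset.univ.erase v := by
          intro w hw
          rw [SimpleGraph.mem_neighborFinset] at hw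
          exact Finset.mem_erase.2 ⟨hw.ne', Finset.mem_univ w⟩
        have hcard : (Finset.univ.erase v).card ≤ (G.neighborFinset v).card := by
          rw [Finset.card_erase_of_mem (Finset.mem_univ v), Finset.card_univ, Fintype.card_fin,
            SimpleGraph.card_neighborFinset_eq_degree, hv]
        have heqset := Finset.eq_of_subset_of_card_le hsub hcard
        intro w hw
        have : w ∈ G.neighborFinset v := by
          rw [heqset]
          exact Finset.mem_erase.2 ⟨hw, Finset.mem_univ w⟩
        rwa [SimpleGraph.mem_neighborFinset] at this
      -- there is exactly one edge not incident to v
      have hinc : G.incidenceFinset v ⊆ G.edgeFinset := by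
        intro e he
        rw [SimpleGraph.mem_incidenceFinset] at he
        exact SimpleGraph.mem_edgeFinset.2 he.1
      have hcards : (G.edgeFinset \ G.incidenceFinset v).card = 1 := by
        rw [Finset.card_sdiff_of_subset hinc, G.card_incidenceFinset_eq_degree, hedge, hv]
        omega
      obtain ⟨e0, he0⟩ := Finset.card_eq_one.1 hcards
      have he0mem : e0 ∈ G.edgeFinset ∧ e0 ∉ G.incidenceFinset v := by
        have : e0 ∈ G.edgeFinset \ G.incidenceFinset v := by
          rw [he0]
          exact Finset.mem_singleton_self e0
        exact Finset.mem_sdiff.1 this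
      obtain ⟨x, y, rfl⟩ : ∃ x y, e0 = s(x, y) := by
        induction e0 using Sym2.ind with
        | _ x y => exact ⟨x, y, rfl⟩
      have hadjxy : G.Adj x y := by
        have h := SimpleGraph.mem_edgeFinset.1 he0mem.1
        rwa [SimpleGraph.mem_edgeSet] at h
      have hvnot : v ∉ (s(x,y) : Sym2 (Fin n)) := by
        intro hcon
        apply he0mem.2
        rw [SimpleGraph.mem_incidenceFinset]
        exact ⟨SimpleGraph.mem_edgeFinset.1 he0mem.1, hcon⟩
      rw [Sym2.mem_iff] at hvnot
      push_neg at hvnot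
      have hxv : x ≠ v := fun h => hvnot.1 h.symm
      have hyv : y ≠ v := fun h => hvnot.2 h.symm
      have hxy : x ≠ y := hadjxy.ne
      have hchar : ∀ u w, G.Adj u w ↔
          (u ≠ w ∧ (u = v ∨ w = v ∨ (u = x ∧ w = y) ∨ (u = y ∧ w = x))) := by
        intro u w
        constructor
        · intro hadj
          refine ⟨hadj.ne, ?_⟩
          by_cases hu : u = v
          · exact Or.inl hu
          by_cases hw : w = v
          · exact Or.inr (Or.inl hw)
          have hmem : s(u, w) ∈ G.edgeFinset \ G.incidenceFinset v := by
            rw [Finset.mem_sdiff]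
            constructor
            · exact SimpleGraph.mem_edgeFinset.2 hadj
            · intro hcon
              rw [SimpleGraph.mem_incidenceFinset] at hcon
              have := hcon.2
              rw [Sym2.mem_iff] at this
              rcases this with h | h
              · exact hu h.symm
              · exact hw h.symm
          rw [he0, Finset.mem_singleton] at hmem
          rw [Sym2.eq_iff] at hmem
          rcases hmem with ⟨h1, h2⟩ | ⟨h1, h2⟩
          · exact Or.inr (Or.inr (Or.inl ⟨h1, h2⟩))
          · exact Or.inr (Or.inr (Or.inr ⟨h1, h2⟩))
        · rintro ⟨hne, h | h | ⟨h1, h2⟩ | ⟨h1, h2⟩⟩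
          · subst h
            exact hadjall w (Ne.symm hne)
          · subst h
            exact (hadjall u hne).symm
          · subst h1; subst h2
            exact hadjxy
          · subst h1; subst h2
            exact hadjxy.symm
      exact iso_star hn G v x y hxv hyv hxy hchar
    · rintro ⟨e⟩
      have hdeg : ∀ u : Fin n, G.degree u = (unicyclicStar n).degree (e u) :=
        fun u => (iso_degree e u).symm
      have hsum2 : ∑ u : Fin n, (G.degree u : ℝ) * a ^ (G.degree u)
          = ∑ w : Fin n, ff a ((unicyclicStar n).degree w) := by
        refine Fintype.sum_equiv e.toEquiv _ _ (fun u => ?_)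
        rw [show (e.toEquiv u) = e u from rfl, ← hdeg u]
        rfl
      rw [hsum2, star_sum hn a]
      have hcast : ((n - 1 : ℕ) : ℝ) = (n : ℝ) - 1 := by
        have : (1:ℕ) ≤ n := by omega
        push_cast [Nat.cast_sub this]
        ring
      simp only [ff, hcast]
      norm_num
      ring
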